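/- Let H be a Hopf algebra over a field K and λ ∈ H* a left integral on H (i.e. h₁ λ(h₂) = λ(h) 1_H for all h ∈ H) with λ(1) = 1. Then the map θ_λ : H ⊗ H → H, x ⊗ y ↦ x₁ λ(x₂ S(y)), is an H-bicolinear retraction of the comultiplication Δ : H → H ⊗ H; in particular H is a coseparable coalgebra. -/

import Mathlib

open TensorProduct

variable {K : Type*} {H : Type*} [Field K] [Ring H] [HopfAlgebra K H]

set_option maxHeartbeats 1000000
set_option synthInstance.maxHeartbeats 400000

/-- The map `θ_λ : H ⊗ H → H`, `x ⊗ y ↦ x₁ λ(x₂ S(y))`. -/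
noncomputable def thetaMap (lam : H →ₗ[K] K) : H ⊗[K] H →ₗ[K] H :=
  (TensorProduct.rid K H).toLinearMap
    ∘ₗ LinearMap.lTensor H lam
    ∘ₗ LinearMap.lTensor H (LinearMap.mul' K H)
    ∘ₗ (TensorProduct.assoc K H H H).toLinearMap
    ∘ₗ LinearMap.rTensor H (Coalgebra.comul (R := K))
    ∘ₗ LinearMap.lTensor H (HopfAlgebra.antipode (R := K))

open Coalgebra HopfAlgebra


noncomputable def muS : H ⊗[K] H →ₗ[K] H :=
  LinearMap.mul' K H ∘ₗ LinearMap.lTensor H (antipode (R := K))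

noncomputable def Th : H ⊗[K] (H ⊗[K] (H ⊗[K] H)) →ₗ[K] H ⊗[K] H :=
  TensorProduct.map (muS) (muS)
    ∘ₗ (TensorProduct.tensorTensorTensorComm K H H H H).toLinearMap
    ∘ₗ LinearMap.lTensor (H ⊗[K] H) (TensorProduct.comm K H H).toLinearMap
    ∘ₗ (TensorProduct.assoc K H H (H ⊗[K] H)).symm.toLinearMap

lemma Th_tmul (a b c d : H) :
    Th (K := K) (a ⊗ₜ (b ⊗ₜ (c ⊗ₜ d)))
      = (a * antipode (R := K) d) ⊗ₜ (b * antipode (R := K) c) := by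
  simp [Th, muS, tensorTensorTensorComm_tmul]

noncomputable def Gm : H →ₗ[K] H ⊗[K] H :=
  (TensorProduct.comm K H H).toLinearMap
    ∘ₗ TensorProduct.map (antipode (R := K)) (antipode (R := K))
    ∘ₗ comul

lemma Gm_apply (c : H) {ι : Type*} (t : Repr K c ι) :
    Gm (K := K) c = ∑ j ∈ t.index,
      antipode (R := K) (t.right j) ⊗ₜ[K] antipode (R := K) (t.left j) := by
  simp only [Gm, LinearMap.comp_apply, LinearEquiv.coe_coe, ← t.eq, map_sum, map_tmul, comm_tmul]

lemma sum_counit_smul_right' {h : H} {ι : Type*} (s : Repr K h ι) :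
    ∑ k ∈ s.index, counit (R := K) (s.left k) • s.right k = h := by
  have := congrArg (TensorProduct.lid K H) (sum_counit_tmul_eq (R := K) s)
  simp only [map_sum, lid_tmul, one_smul] at this
  exact this

lemma claimA (d : H) {ι : Type*} (u : Repr K d ι) :
    ∑ m ∈ u.index, comul (R := K) (u.left m) * Gm (K := K) (u.right m)
      = counit (R := K) d • (1 : H ⊗[K] H) := by
  set S := fun h : H => antipode (R := K) h with hS
  let L : (m : u.ι) → Repr K (u.left m) (H × H) := fun m => ℛ K (u.left m)
  let R : (m : u.ι) → Repr K (u.right m) (H × H) := fun m => ℛ K (u.right m)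
  let RL := fun (m : u.ι) (n : (R m).ι) => ℛ K ((R m).left n)
  let RR := fun (m : u.ι) (n : (R m).ι) => ℛ K ((R m).right n)
  have hA1 : ∑ m ∈ u.index, comul (R := K) (u.left m) * Gm (K := K) (u.right m)
      = ∑ m ∈ u.index, ∑ p ∈ (L m).index, ∑ n ∈ (R m).index,
          ((L m).left p * S ((R m).right n)) ⊗ₜ[K] ((L m).right p * S ((R m).left n)) := by
    refine Finset.sum_congr rfl fun m _ => ?_
    rw [← (L m).eq, Gm_apply _ (R m), Finset.sum_mul_sum]
    simp [Algebra.TensorProduct.tmul_mul_tmul, hS]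
  have c3 := sum_tmul_tmul_eq u L R
  apply_fun LinearMap.lTensor H (LinearMap.lTensor H (comul (R := K))) at c3
  simp only [map_sum, LinearMap.lTensor_tmul] at c3
  have c3' : ∑ m ∈ u.index, ∑ p ∈ (L m).index, ∑ n ∈ (R m).index,
        (L m).left p ⊗ₜ[K] ((L m).right p ⊗ₜ[K] ((R m).left n ⊗ₜ[K] (R m).right n))
      = ∑ m ∈ u.index, ∑ n ∈ (R m).index, ∑ q ∈ (RR m n).index,
        u.left m ⊗ₜ[K] ((R m).left n ⊗ₜ[K] ((RR m n).left q ⊗ₜ[K] (RR m n).right q)) := by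
    calc ∑ m ∈ u.index, ∑ p ∈ (L m).index, ∑ n ∈ (R m).index,
        (L m).left p ⊗ₜ[K] ((L m).right p ⊗ₜ[K] ((R m).left n ⊗ₜ[K] (R m).right n))
        = ∑ m ∈ u.index, ∑ p ∈ (L m).index,
            (L m).left p ⊗ₜ[K] ((L m).right p ⊗ₜ[K] comul (R := K) (u.right m)) := by
          refine Finset.sum_congr rfl fun m _ => Finset.sum_congr rfl fun p _ => ?_
          rw [← (R m).eq, tmul_sum, tmul_sum]
      _ = ∑ m ∈ u.index, ∑ n ∈ (R m).index,
            u.left m ⊗ₜ[K] ((R m).left n ⊗ₜ[K] comul (R := K) ((R m).right n)) := c3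
      _ = _ := by
          refine Finset.sum_congr rfl fun m _ => Finset.sum_congr rfl fun n _ => ?_
          rw [← (RR m n).eq, tmul_sum, tmul_sum]
  have e2 : ∀ m, ∑ n ∈ (R m).index, ∑ q ∈ (RR m n).index,
        u.left m ⊗ₜ[K] ((R m).left n ⊗ₜ[K] ((RR m n).left q ⊗ₜ[K] (RR m n).right q))
      = ∑ n ∈ (R m).index, ∑ q ∈ (RL m n).index,
        u.left m ⊗ₜ[K] ((RL m n).left q ⊗ₜ[K] ((RL m n).right q ⊗ₜ[K] (R m).right n)) := by
    intro m
    have h := sum_tmul_tmul_eq (R m) (RL m) (RR m)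
    apply_fun (TensorProduct.mk K H (H ⊗[K] (H ⊗[K] H)) (u.left m)) at h
    simp only [map_sum, mk_apply] at h
    exact h.symm
  calc ∑ m ∈ u.index, comul (R := K) (u.left m) * Gm (K := K) (u.right m)
      = Th (K := K) (∑ m ∈ u.index, ∑ p ∈ (L m).index, ∑ n ∈ (R m).index,
          (L m).left p ⊗ₜ[K] ((L m).right p ⊗ₜ[K] ((R m).left n ⊗ₜ[K] (R m).right n))) := by
        rw [hA1, map_sum]
        refine Finset.sum_congr rfl fun m _ => ?_
        rw [map_sum]
        refine Finset.sum_congr rfl fun p _ => ?_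
        rw [map_sum]
        exact Finset.sum_congr rfl fun n _ => (Th_tmul _ _ _ _).symm
    _ = Th (K := K) (∑ m ∈ u.index, ∑ n ∈ (R m).index, ∑ q ∈ (RL m n).index,
          u.left m ⊗ₜ[K] ((RL m n).left q ⊗ₜ[K] ((RL m n).right q ⊗ₜ[K] (R m).right n))) := by
        rw [c3']
        exact congrArg _ (Finset.sum_congr rfl fun m _ => e2 m)
    _ = ∑ m ∈ u.index, ∑ n ∈ (R m).index,
          (u.left m * S ((R m).right n)) ⊗ₜ[K] (counit (R := K) ((R m).left n) • (1 : H)) := by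
        rw [map_sum]
        refine Finset.sum_congr rfl fun m _ => ?_
        rw [map_sum]
        refine Finset.sum_congr rfl fun n _ => ?_
        rw [map_sum]
        calc ∑ q ∈ (RL m n).index, Th (K := K)
              (u.left m ⊗ₜ[K] ((RL m n).left q ⊗ₜ[K] ((RL m n).right q ⊗ₜ[K] (R m).right n)))
            = (u.left m * S ((R m).right n)) ⊗ₜ[K]
                (∑ q ∈ (RL m n).index, (RL m n).left q * S ((RL m n).right q)) := by
              rw [tmul_sum]
              exact Finset.sum_congr rfl fun q _ => Th_tmul _ _ _ _
          _ = _ := by rw [sum_mul_antipode_eq_smul (RL m n)]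
    _ = ∑ m ∈ u.index, (u.left m * S (u.right m)) ⊗ₜ[K] (1 : H) := by
        refine Finset.sum_congr rfl fun m _ => ?_
        calc ∑ n ∈ (R m).index,
              (u.left m * S ((R m).right n)) ⊗ₜ[K] (counit (R := K) ((R m).left n) • (1 : H))
            = ∑ n ∈ (R m).index,
              (u.left m * S (counit (R := K) ((R m).left n) • (R m).right n)) ⊗ₜ[K] (1 : H) := by
              refine Finset.sum_congr rfl fun n _ => ?_
              simp [hS, mul_smul_comm, smul_tmul', tmul_smul]
          _ = _ := by
              rw [← sum_tmul]
              congr 1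
              rw [← Finset.mul_sum]
              congr 1
              have : ∑ n ∈ (R m).index, S (counit (R := K) ((R m).left n) • (R m).right n)
                  = S (∑ n ∈ (R m).index, counit (R := K) ((R m).left n) • (R m).right n) := by
                rw [hS]; exact (map_sum (antipode (R := K)) _ _).symm
              rw [this, sum_counit_smul_right' (R m)]
    _ = counit (R := K) d • (1 : H ⊗[K] H) := by
        rw [← sum_tmul, sum_mul_antipode_eq_smul u, Algebra.TensorProduct.one_def, smul_tmul']

noncomputable def Fm : H →ₗ[K] H ⊗[K] H := comul ∘ₗ antipode (R := K)

lemma claimB (d : H) {ι : Type*} (u : Repr K d ι) :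
    ∑ m ∈ u.index, Fm (K := K) (u.left m) * comul (R := K) (u.right m)
      = counit (R := K) d • (1 : H ⊗[K] H) := by
  have : ∀ m, Fm (K := K) (u.left m) * comul (R := K) (u.right m)
      = comul (R := K) (antipode (R := K) (u.left m) * u.right m) := by
    intro m; simp [Fm, Bialgebra.comul_mul]
  rw [Finset.sum_congr rfl fun m _ => this m, ← map_sum, sum_antipode_mul_eq_smul, map_smul,
    Bialgebra.comul_one]

lemma sum_smul_counit_left' {h : H} {ι : Type*} (s : Repr K h ι) :
    ∑ k ∈ s.index, counit (R := K) (s.right k) • s.left k = h := by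
  have := congrArg (TensorProduct.rid K H) (sum_tmul_counit_eq (R := K) s)
  simp only [map_sum, rid_tmul, one_smul] at this
  exact this

/-- The antipode is an anti-coalgebra morphism. -/
lemma comul_antipode (c : H) : comul (R := K) (antipode (R := K) c) = Gm (K := K) c := by
  let t : Repr K c (H × H) := ℛ K c
  let tl := fun (j : t.ι) => ℛ K (t.left j)
  let tr := fun (j : t.ι) => ℛ K (t.right j)
  let Phi : H ⊗[K] (H ⊗[K] H) →ₗ[K] H ⊗[K] H :=
    LinearMap.mul' K (H ⊗[K] H) ∘ₗ
      TensorProduct.map (Fm (K := K))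
        (LinearMap.mul' K (H ⊗[K] H) ∘ₗ TensorProduct.map (comul (R := K)) (Gm (K := K)))
  have Phi_tmul : ∀ (a b c' : H), Phi (a ⊗ₜ (b ⊗ₜ c'))
      = Fm (K := K) a * (comul (R := K) b * Gm (K := K) c') := by
    intro a b c'; simp [Phi]
  have key := sum_tmul_tmul_eq t tl tr
  apply_fun Phi at key
  simp only [map_sum, Phi_tmul] at key
  calc comul (R := K) (antipode (R := K) c)
      = ∑ j ∈ t.index, counit (R := K) (t.right j) • Fm (K := K) (t.left j) := by
        conv_lhs => rw [← sum_smul_counit_left' t]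
        simp [Fm, map_sum]
    _ = ∑ j ∈ t.index, Fm (K := K) (t.left j)
          * (counit (R := K) (t.right j) • (1 : H ⊗[K] H)) := by
        refine Finset.sum_congr rfl fun j _ => ?_
        rw [mul_smul_comm, mul_one]
    _ = ∑ j ∈ t.index, ∑ m ∈ (tr j).index, Fm (K := K) (t.left j)
          * (comul (R := K) ((tr j).left m) * Gm (K := K) ((tr j).right m)) := by
        refine Finset.sum_congr rfl fun j _ => ?_
        rw [← claimA (t.right j) (tr j), Finset.mul_sum]
    _ = ∑ j ∈ t.index, ∑ p ∈ (tl j).index, Fm (K := K) ((tl j).left p)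
          * (comul (R := K) ((tl j).right p) * Gm (K := K) (t.right j)) := key.symm
    _ = ∑ j ∈ t.index, (counit (R := K) (t.left j) • (1 : H ⊗[K] H)) * Gm (K := K) (t.right j) := by
        refine Finset.sum_congr rfl fun j _ => ?_
        rw [← claimB (t.left j) (tl j), Finset.sum_mul]
        exact Finset.sum_congr rfl fun p _ => (mul_assoc _ _ _).symm
    _ = Gm (K := K) c := by
        conv_rhs => rw [← sum_counit_smul_right' t]
        rw [map_sum]
        refine Finset.sum_congr rfl fun j _ => ?_
        rw [smul_mul_assoc, one_mul, map_smul]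


lemma theta_tmul (lam : H →ₗ[K] K) (x y : H) {ι : Type*} (r : Repr K x ι) :
    thetaMap lam (x ⊗ₜ y) =
      ∑ i ∈ r.index, lam (r.right i * antipode (R := K) y) • r.left i := by
  simp only [thetaMap, LinearMap.comp_apply, LinearEquiv.coe_coe, LinearMap.lTensor_tmul,
    LinearMap.rTensor_tmul, ← r.eq, map_sum, sum_tmul, assoc_tmul, LinearMap.mul'_apply,
    rid_tmul]

noncomputable def psi (lam : H →ₗ[K] K) (a b : H) : H ⊗[K] (H ⊗[K] H) →ₗ[K] H :=
  (TensorProduct.lid K H).toLinearMap ∘ₗ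
    TensorProduct.map (lam ∘ₗ LinearMap.mulLeft K b ∘ₗ antipode (R := K))
      (LinearMap.mulLeft K a ∘ₗ LinearMap.mul' K H ∘ₗ LinearMap.rTensor H (antipode (R := K)))

lemma psi_tmul (lam : H →ₗ[K] K) (a b u v w : H) :
    psi lam a b (u ⊗ₜ (v ⊗ₜ w))
      = lam (b * antipode (R := K) u) • (a * (antipode (R := K) v * w)) := by
  simp [psi]

lemma KI (lam : H →ₗ[K] K)
    (hlam : ∀ h : H,
      (TensorProduct.rid K H) ((LinearMap.lTensor H lam) (Coalgebra.comul (R := K) h)) =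
        lam h • (1 : H))
    (a y : H) {ι : Type*} (s : Repr K y ι) :
    thetaMap lam (a ⊗ₜ y)
      = ∑ k ∈ s.index, lam (a * antipode (R := K) (s.left k)) • s.right k := by
  let r : Repr K a (H × H) := ℛ K a
  let c := fun (k : s.ι) => ℛ K (s.left k)
  let dd := fun (k : s.ι) => ℛ K (s.right k)
  have hcom : ∀ k, comul (R := K) (a * antipode (R := K) (s.left k))
      = ∑ i ∈ r.index, ∑ m ∈ (c k).index,
          (r.left i * antipode (R := K) ((c k).right m)) ⊗ₜ[K]
            (r.right i * antipode (R := K) ((c k).left m)) := by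
    intro k
    rw [Bialgebra.comul_mul, comul_antipode, Gm_apply _ (c k), ← r.eq, Finset.sum_mul_sum]
    simp [Algebra.TensorProduct.tmul_mul_tmul]
  calc thetaMap lam (a ⊗ₜ y)
      = ∑ i ∈ r.index, lam (r.right i * antipode (R := K) y) • r.left i := theta_tmul lam a y r
    _ = ∑ i ∈ r.index, ∑ k ∈ s.index, ∑ m ∈ (c k).index,
          lam (r.right i * antipode (R := K) ((c k).left m)) •
            (r.left i * (antipode (R := K) ((c k).right m) * s.right k)) := by
        refine Finset.sum_congr rfl fun i _ => ?_
        have hi := sum_tmul_tmul_eq s c dd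
        apply_fun (psi lam (r.left i) (r.right i)) at hi
        simp only [map_sum, psi_tmul] at hi
        have collapse : ∑ k ∈ s.index, ∑ m ∈ (dd k).index,
            lam (r.right i * antipode (R := K) (s.left k)) •
              (r.left i * (antipode (R := K) ((dd k).left m) * (dd k).right m))
            = lam (r.right i * antipode (R := K) y) • r.left i := by
          calc ∑ k ∈ s.index, ∑ m ∈ (dd k).index,
              lam (r.right i * antipode (R := K) (s.left k)) •
                (r.left i * (antipode (R := K) ((dd k).left m) * (dd k).right m))
              = ∑ k ∈ s.index, lam (r.right i * antipode (R := K) (s.left k)) •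
                  (r.left i * (counit (R := K) (s.right k) • (1 : H))) := by
                refine Finset.sum_congr rfl fun k _ => ?_
                rw [← Finset.smul_sum, ← Finset.mul_sum, sum_antipode_mul_eq_smul (dd k)]
            _ = ∑ k ∈ s.index,
                  lam (r.right i * antipode (R := K) (counit (R := K) (s.right k) • s.left k))
                    • r.left i := by
                refine Finset.sum_congr rfl fun k _ => ?_
                rw [mul_smul_comm, mul_one, smul_smul, map_smul, mul_smul_comm, map_smul,
                  smul_eq_mul, mul_comm]
            _ = lam (r.right i * antipode (R := K) y) • r.left i := by
                rw [← Finset.sum_smul]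
                congr 1
                rw [← map_sum lam, ← Finset.mul_sum, ← map_sum (antipode (R := K)),
                  sum_smul_counit_left' s]
        rw [← collapse]
        exact hi.symm
    _ = ∑ k ∈ s.index, ∑ i ∈ r.index, ∑ m ∈ (c k).index,
          lam (r.right i * antipode (R := K) ((c k).left m)) •
            (r.left i * (antipode (R := K) ((c k).right m) * s.right k)) := Finset.sum_comm
    _ = ∑ k ∈ s.index, lam (a * antipode (R := K) (s.left k)) • s.right k := by
        refine Finset.sum_congr rfl fun k _ => ?_
        have h1 : lam (a * antipode (R := K) (s.left k)) • (1 : H)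
            = ∑ i ∈ r.index, ∑ m ∈ (c k).index,
                lam (r.right i * antipode (R := K) ((c k).left m)) •
                  (r.left i * antipode (R := K) ((c k).right m)) :=
          by rw [← hlam (a * antipode (R := K) (s.left k)), hcom k]; simp [map_sum]
        calc ∑ i ∈ r.index, ∑ m ∈ (c k).index,
              lam (r.right i * antipode (R := K) ((c k).left m)) •
                (r.left i * (antipode (R := K) ((c k).right m) * s.right k))
            = (∑ i ∈ r.index, ∑ m ∈ (c k).index,
                lam (r.right i * antipode (R := K) ((c k).left m)) •
                  (r.left i * antipode (R := K) ((c k).right m))) * s.right k := by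
              rw [Finset.sum_mul]
              refine Finset.sum_congr rfl fun i _ => ?_
              rw [Finset.sum_mul]
              refine Finset.sum_congr rfl fun m _ => ?_
              rw [smul_mul_assoc, mul_assoc]
          _ = (lam (a * antipode (R := K) (s.left k)) • (1 : H)) * s.right k := by rw [← h1]
          _ = lam (a * antipode (R := K) (s.left k)) • s.right k := by
              rw [smul_mul_assoc, one_mul]

lemma goal1 (lam : H →ₗ[K] K) (hlam1 : lam (1 : H) = 1) :
    thetaMap (K := K) (H := H) lam ∘ₗ Coalgebra.comul (R := K) = LinearMap.id := by
  ext x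
  let r : Repr K x (H × H) := ℛ K x
  let rl := fun (i : r.ι) => ℛ K (r.left i)
  let rr := fun (i : r.ι) => ℛ K (r.right i)
  let phi1 : H ⊗[K] (H ⊗[K] H) →ₗ[K] H :=
    (TensorProduct.rid K H).toLinearMap ∘ₗ LinearMap.lTensor H (lam ∘ₗ muS (K := K))
  have phi1_tmul : ∀ u v w : H,
      phi1 (u ⊗ₜ (v ⊗ₜ w)) = lam (v * antipode (R := K) w) • u := by
    intro u v w; simp [phi1, muS]
  have key := sum_tmul_tmul_eq r rl rr
  apply_fun phi1 at key
  simp only [map_sum, phi1_tmul] at key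
  calc thetaMap lam (comul (R := K) x)
      = ∑ i ∈ r.index, thetaMap lam (r.left i ⊗ₜ r.right i) := by
        rw [← r.eq, map_sum]
    _ = ∑ i ∈ r.index, ∑ j ∈ (rl i).index,
          lam ((rl i).right j * antipode (R := K) (r.right i)) • (rl i).left j := by
        exact Finset.sum_congr rfl fun i _ => theta_tmul lam _ _ (rl i)
    _ = ∑ i ∈ r.index, ∑ j ∈ (rr i).index,
          lam ((rr i).left j * antipode (R := K) ((rr i).right j)) • r.left i := key
    _ = ∑ i ∈ r.index, counit (R := K) (r.right i) • r.left i := by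
        refine Finset.sum_congr rfl fun i _ => ?_
        rw [← Finset.sum_smul, ← map_sum lam, sum_mul_antipode_eq_smul (rr i), map_smul,
          hlam1, smul_eq_mul, mul_one]
    _ = x := sum_smul_counit_left' r

lemma goal2 (lam : H →ₗ[K] K) :
    Coalgebra.comul (R := K) ∘ₗ thetaMap (K := K) (H := H) lam =
      LinearMap.lTensor H (thetaMap lam)
        ∘ₗ (TensorProduct.assoc K H H H).toLinearMap
        ∘ₗ LinearMap.rTensor H (Coalgebra.comul (R := K)) := by
  apply TensorProduct.ext'
  intro x y
  let r : Repr K x (H × H) := ℛ K x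
  let rl := fun (i : r.ι) => ℛ K (r.left i)
  let rr := fun (i : r.ι) => ℛ K (r.right i)
  let chi : H ⊗[K] (H ⊗[K] H) →ₗ[K] H ⊗[K] H :=
    (TensorProduct.rid K (H ⊗[K] H)).toLinearMap
      ∘ₗ LinearMap.lTensor (H ⊗[K] H) (lam ∘ₗ LinearMap.mulRight K (antipode (R := K) y))
      ∘ₗ (TensorProduct.assoc K H H H).symm.toLinearMap
  have chi_tmul : ∀ u v w : H,
      chi (u ⊗ₜ (v ⊗ₜ w)) = lam (w * antipode (R := K) y) • (u ⊗ₜ[K] v) := by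
    intro u v w; simp [chi]
  have key := sum_tmul_tmul_eq r rl rr
  apply_fun chi at key
  simp only [map_sum, chi_tmul] at key
  calc comul (R := K) (thetaMap lam (x ⊗ₜ y))
      = ∑ i ∈ r.index, ∑ j ∈ (rl i).index,
          lam (r.right i * antipode (R := K) y) • ((rl i).left j ⊗ₜ[K] (rl i).right j) := by
        rw [theta_tmul lam x y r, map_sum]
        refine Finset.sum_congr rfl fun i _ => ?_
        rw [map_smul, ← (rl i).eq, Finset.smul_sum]
    _ = ∑ i ∈ r.index, ∑ j ∈ (rr i).index,
          lam ((rr i).right j * antipode (R := K) y) • (r.left i ⊗ₜ[K] (rr i).left j) := key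
    _ = (LinearMap.lTensor H (thetaMap lam)
        ∘ₗ (TensorProduct.assoc K H H H).toLinearMap
        ∘ₗ LinearMap.rTensor H (Coalgebra.comul (R := K))) (x ⊗ₜ y) := by
        simp only [LinearMap.comp_apply, LinearEquiv.coe_coe, LinearMap.rTensor_tmul, ← r.eq,
          sum_tmul, map_sum, assoc_tmul, LinearMap.lTensor_tmul]
        refine Finset.sum_congr rfl fun i _ => ?_
        rw [theta_tmul lam _ y (rr i), tmul_sum]
        exact Finset.sum_congr rfl fun j _ => (tmul_smul _ _ _).symm

lemma goal3 (lam : H →ₗ[K] K)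
    (hlam : ∀ h : H,
      (TensorProduct.rid K H) ((LinearMap.lTensor H lam) (Coalgebra.comul (R := K) h)) =
        lam h • (1 : H)) :
    Coalgebra.comul (R := K) ∘ₗ thetaMap (K := K) (H := H) lam =
      LinearMap.rTensor H (thetaMap lam)
        ∘ₗ (TensorProduct.assoc K H H H).symm.toLinearMap
        ∘ₗ LinearMap.lTensor H (Coalgebra.comul (R := K)) := by
  apply TensorProduct.ext'
  intro x y
  let r : Repr K x (H × H) := ℛ K x
  let s : Repr K y (H × H) := ℛ K y
  have lhs_eq : comul (R := K) (thetaMap lam (x ⊗ₜ y))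
      = ∑ i ∈ r.index, r.left i ⊗ₜ[K] thetaMap lam (r.right i ⊗ₜ y) := by
    have := congrFun (congrArg DFunLike.coe (goal2 lam)) (x ⊗ₜ y)
    simp only [LinearMap.comp_apply, LinearEquiv.coe_coe, LinearMap.rTensor_tmul] at this
    rw [this, ← r.eq, sum_tmul, map_sum]
    simp only [assoc_tmul, map_sum, LinearMap.lTensor_tmul]
  simp only [LinearMap.comp_apply]
  rw [lhs_eq]
  simp only [LinearEquiv.coe_coe, LinearMap.lTensor_tmul, ← s.eq,
    tmul_sum, map_sum, assoc_symm_tmul, LinearMap.rTensor_tmul]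
  calc ∑ i ∈ r.index, r.left i ⊗ₜ[K] thetaMap lam (r.right i ⊗ₜ y)
      = ∑ i ∈ r.index, r.left i ⊗ₜ[K]
          (∑ k ∈ s.index, lam (r.right i * antipode (R := K) (s.left k)) • s.right k) := by
        exact Finset.sum_congr rfl fun i _ => by rw [KI lam hlam (r.right i) y s]
    _ = ∑ i ∈ r.index, ∑ k ∈ s.index,
          lam (r.right i * antipode (R := K) (s.left k)) • (r.left i ⊗ₜ[K] s.right k) := by
        refine Finset.sum_congr rfl fun i _ => ?_
        rw [tmul_sum]
        exact Finset.sum_congr rfl fun k _ => tmul_smul _ _ _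
    _ = ∑ k ∈ s.index, ∑ i ∈ r.index,
          lam (r.right i * antipode (R := K) (s.left k)) • (r.left i ⊗ₜ[K] s.right k) :=
        Finset.sum_comm
    _ = ∑ k ∈ s.index, thetaMap lam (x ⊗ₜ s.left k) ⊗ₜ[K] s.right k := by
        refine Finset.sum_congr rfl fun k _ => ?_
        rw [theta_tmul lam x (s.left k) r, sum_tmul]
        exact Finset.sum_congr rfl fun i _ => by rw [smul_tmul']

/-- If `λ ∈ H*` is a left integral with `λ(1) = 1`, then `θ_λ` is an
`H`-bicolinear retraction of the comultiplication; in particular `H` is a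
coseparable coalgebra. -/
theorem total_dual_integral_gives_coseparable
    (lam : H →ₗ[K] K)
    (hlam : ∀ h : H,
      (TensorProduct.rid K H) ((LinearMap.lTensor H lam) (Coalgebra.comul (R := K) h)) =
        lam h • (1 : H))
    (hlam1 : lam (1 : H) = 1) :
    -- retraction of the comultiplication
    (thetaMap lam ∘ₗ Coalgebra.comul (R := K) = LinearMap.id) ∧
    -- left `H`-colinearity
    (Coalgebra.comul (R := K) ∘ₗ thetaMap lam =
      LinearMap.lTensor H (thetaMap lam)
        ∘ₗ (TensorProduct.assoc K H H H).toLinearMap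
        ∘ₗ LinearMap.rTensor H (Coalgebra.comul (R := K))) ∧
    -- right `H`-colinearity
    (Coalgebra.comul (R := K) ∘ₗ thetaMap lam =
      LinearMap.rTensor H (thetaMap lam)
        ∘ₗ (TensorProduct.assoc K H H H).symm.toLinearMap
        ∘ₗ LinearMap.lTensor H (Coalgebra.comul (R := K))) := by
  exact ⟨goal1 lam hlam1, goal2 lam, goal3 lam hlam⟩
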